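/- Let U > 0, p > 0 and ε ∈ (0,1), and define π(n) = (1 − ε^n)·U − n·p for n ∈ ℕ. Then sup_{n ∈ ℕ} π(n) > 0 if and only if p < (1 − ε)·U; moreover sup_{n ∈ ℕ} π(n) ≥ 0 always holds, and when p = (1 − ε)·U the supremum equals 0 and is attained at both n = 0 and n = 1. -/
import Mathlib


/-- with payoff `π n = (1 - ε^n)·U - n·p` (`U > 0`, `p > 0`,
`ε ∈ (0,1)`): `sup_n π n > 0 ↔ p < (1-ε)·U`; moreover `sup_n π n ≥ 0` always,
and when `p = (1-ε)·U` the supremum equals `0` and is attained at `n = 0` and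
`n = 1`. -/
theorem positive_sup_payoff_iff_price_below_ceiling
    (U p ε : ℝ) (hU : 0 < U) (hp : 0 < p) (hε : ε ∈ Set.Ioo (0 : ℝ) 1)
    (π : ℕ → ℝ) (hπ : ∀ n : ℕ, π n = (1 - ε ^ n) * U - n * p) :
    ((0 < ⨆ n : ℕ, π n) ↔ p < (1 - ε) * U) ∧
    (0 ≤ ⨆ n : ℕ, π n) ∧
    (p = (1 - ε) * U → (⨆ n : ℕ, π n) = 0 ∧ π 0 = 0 ∧ π 1 = 0) := by
  obtain ⟨hε0, hε1⟩ := hε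
  -- Bernoulli: 1 - ε^n ≤ n (1-ε)
  have hbern : ∀ n : ℕ, 1 - ε ^ n ≤ n * (1 - ε) := by
    intro n
    have h := one_add_mul_le_pow (a := ε - 1) (by linarith) n
    have : 1 + (n : ℝ) * (ε - 1) ≤ ε ^ n := by
      simpa using h
    nlinarith
  have hbdd : BddAbove (Set.range π) := by
    refine ⟨U, ?_⟩
    rintro x ⟨n, rfl⟩
    have hpow : 0 ≤ ε ^ n := by positivity
    have : (0:ℝ) ≤ n * p := by positivity
    rw [hπ n]
    nlinarith
  have hπ0 : π 0 = 0 := by simp [hπ 0]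
  have hle : π 0 ≤ ⨆ n : ℕ, π n := le_ciSup hbdd 0
  have hsup0 : 0 ≤ ⨆ n : ℕ, π n := by rwa [hπ0] at hle
  refine ⟨⟨?_, ?_⟩, hsup0, ?_⟩
  · intro hpos
    by_contra hc
    push_neg at hc
    have hall : ∀ n : ℕ, π n ≤ 0 := by
      intro n
      rw [hπ n]
      have hb := hbern n
      have : (1 - ε ^ n) * U ≤ (n : ℝ) * ((1 - ε) * U) := by nlinarith
      have : (n : ℝ) * ((1 - ε) * U) ≤ n * p := by
        have : (0:ℝ) ≤ n := Nat.cast_nonneg n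
        nlinarith
      nlinarith [hbern n]
    have := ciSup_le hall
    linarith
  · intro hlt
    have h1 : π 1 = (1 - ε) * U - p := by simp [hπ 1]
    have hp1 : 0 < π 1 := by rw [h1]; linarith
    have := le_ciSup hbdd 1
    linarith
  · intro heq
    have hall : ∀ n : ℕ, π n ≤ 0 := by
      intro n
      rw [hπ n, heq]
      have hb := hbern n
      have hn : (0:ℝ) ≤ n := Nat.cast_nonneg n
      nlinarith
    refine ⟨le_antisymm (ciSup_le hall) hsup0, hπ0, ?_⟩
    simp [hπ 1, heq]
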